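/- Let the prior be p(w, {(m_i, τ_i)}) = D(w; a)·Π_{i=1}^K NΓ(m_i, τ_i; μ_i, λ_i, α_i, β_i) and the likelihood p(y | w, m, τ) = Σ_{i=1}^K w_i N(y; m_i, τ_i^{−1}). Then the posterior given observation y equals (1/M)·Σ_{j=1}^K u_j c_j* · D(w; a + e_j) · NΓ(m_j, τ_j; μ_j*, λ_j*, α_j*, β_j*) · Π_{i ≠ j} NΓ(m_i, τ_i; μ_i, λ_i, α_i, β_i), where u_j = a_j/Σ_i a_i, (μ_j*, λ_j*, α_j*, β_j*) is the single-observation normal-gamma update, c_j* the corresponding evidence, e_j the j-th standard basis vector, and M = Σ_j u_j c_j*. -/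

import Mathlib

open Real

/-- Gaussian density `N(y; m, τ⁻¹)` with precision `τ`. -/
noncomputable def gaussDensity (m τ y : ℝ) : ℝ :=
  Real.sqrt (τ / (2 * Real.pi)) * Real.exp (-τ * (y - m) ^ 2 / 2)

/-- The normalized normal-gamma density on `ℝ × ℝ_{>0}`. -/
noncomputable def nGammaDensity (μ lam α β : ℝ) (m τ : ℝ) : ℝ :=
  (β ^ α * Real.sqrt lam / (Real.Gamma α * Real.sqrt (2 * Real.pi))) *
    τ ^ (α - 1 / 2) * Real.exp (-β * τ - lam * τ * (m - μ) ^ 2 / 2)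

/-- The normalized Dirichlet density on the open simplex. -/
noncomputable def dirDensity {K : ℕ} (a : Fin K → ℝ) (w : Fin K → ℝ) : ℝ :=
  (Real.Gamma (∑ i, a i) / ∏ i, Real.Gamma (a i)) * ∏ i, w i ^ (a i - 1)

lemma conj_step (μ lam α β y m τ : ℝ) (hlam : 0 < lam) (hα : 0 < α) (hβ : 0 < β)
    (hτ : 0 < τ) :
    gaussDensity m τ y * nGammaDensity μ lam α β m τ =
    ((1 / Real.sqrt (2 * Real.pi)) * Real.sqrt (lam / (lam + 1)) *
      (Real.Gamma (α + 1 / 2) / Real.Gamma α) *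
      (β ^ α / (β + lam * (y - μ) ^ 2 / (2 * (1 + lam))) ^ (α + 1 / 2))) *
    nGammaDensity ((lam * μ + y) / (lam + 1)) (lam + 1) (α + 1 / 2)
      (β + lam * (y - μ) ^ 2 / (2 * (1 + lam))) m τ := by
  have hlam1 : (0:ℝ) < lam + 1 := by linarith
  have hlam1' : (0:ℝ) < 1 + lam := by linarith
  set βs : ℝ := β + lam * (y - μ) ^ 2 / (2 * (1 + lam)) with hβsdef
  have hβs0 : 0 < βs := by positivity
  have hπ : 0 < Real.sqrt (2 * Real.pi) := Real.sqrt_pos.mpr (by positivity)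
  have hΓα : 0 < Real.Gamma α := Real.Gamma_pos_of_pos hα
  have hΓαs : 0 < Real.Gamma (α + 1 / 2) := Real.Gamma_pos_of_pos (by linarith)
  have hβsp : 0 < βs ^ (α + 1 / 2) := Real.rpow_pos_of_pos hβs0 _
  have hexp : Real.exp (-τ * (y - m) ^ 2 / 2) * Real.exp (-β * τ - lam * τ * (m - μ) ^ 2 / 2)
      = Real.exp (-βs * τ - (lam + 1) * τ * (m - (lam * μ + y) / (lam + 1)) ^ 2 / 2) := by
    rw [← Real.exp_add]
    congr 1
    rw [hβsdef]
    field_simp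
    ring
  have hτα : Real.sqrt τ * τ ^ (α - 1 / 2) = τ ^ α := by
    rw [Real.sqrt_eq_rpow, ← Real.rpow_add hτ]
    norm_num
  have hταs : τ ^ (α + 1 / 2 - 1 / 2) = τ ^ α := by norm_num
  have hcoef : Real.sqrt (τ / (2 * Real.pi)) *
      (β ^ α * Real.sqrt lam / (Real.Gamma α * Real.sqrt (2 * Real.pi)) * τ ^ (α - 1 / 2)) =
      ((1 / Real.sqrt (2 * Real.pi)) * Real.sqrt (lam / (lam + 1)) *
        (Real.Gamma (α + 1 / 2) / Real.Gamma α) * (β ^ α / βs ^ (α + 1 / 2))) *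
      (βs ^ (α + 1 / 2) * Real.sqrt (lam + 1) / (Real.Gamma (α + 1 / 2) * Real.sqrt (2 * Real.pi)) *
        τ ^ (α + 1 / 2 - 1 / 2)) := by
    have hsl1 : 0 < Real.sqrt (lam + 1) := Real.sqrt_pos.mpr hlam1
    rw [hταs, ← hτα, Real.sqrt_div hτ.le, Real.sqrt_div hlam.le]
    generalize τ ^ (α - 1 / 2) = t
    generalize βs ^ (α + 1 / 2) = B at hβsp ⊢
    field_simp
  unfold gaussDensity nGammaDensity
  calc Real.sqrt (τ / (2 * Real.pi)) * Real.exp (-τ * (y - m) ^ 2 / 2) *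
        (β ^ α * Real.sqrt lam / (Real.Gamma α * Real.sqrt (2 * Real.pi)) * τ ^ (α - 1 / 2) *
          Real.exp (-β * τ - lam * τ * (m - μ) ^ 2 / 2))
      = (Real.sqrt (τ / (2 * Real.pi)) *
          (β ^ α * Real.sqrt lam / (Real.Gamma α * Real.sqrt (2 * Real.pi)) * τ ^ (α - 1 / 2))) *
        (Real.exp (-τ * (y - m) ^ 2 / 2) * Real.exp (-β * τ - lam * τ * (m - μ) ^ 2 / 2)) := by ring
    _ = _ := by rw [hexp, hcoef]; ring

lemma dir_step {K : ℕ} (a : Fin K → ℝ) (ha : ∀ i, 0 < a i) (j : Fin K)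
    (w : Fin K → ℝ) (hw : ∀ i, 0 < w i) :
    w j * dirDensity a w =
    (a j / ∑ i, a i) * dirDensity (fun i => a i + if i = j then 1 else 0) w := by
  have hsa : 0 < ∑ i, a i :=
    Finset.sum_pos (fun i _ => ha i) ⟨j, Finset.mem_univ j⟩
  have hsum : (∑ i, (a i + if i = j then 1 else 0)) = (∑ i, a i) + 1 := by
    rw [Finset.sum_add_distrib]
    simp
  have hΓsum : Real.Gamma ((∑ i, a i) + 1) = (∑ i, a i) * Real.Gamma (∑ i, a i) :=
    Real.Gamma_add_one hsa.ne'
  have hprodΓ : (∏ i, Real.Gamma (a i + if i = j then 1 else 0))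
      = (a j * Real.Gamma (a j)) * ∏ i ∈ Finset.univ.erase j, Real.Gamma (a i) := by
    rw [← Finset.mul_prod_erase _ (fun i => Real.Gamma (a i + if i = j then 1 else 0))
      (Finset.mem_univ j)]
    rw [if_pos rfl, Real.Gamma_add_one (ha j).ne']
    congr 1
    refine Finset.prod_congr rfl fun i hi => ?_
    rw [if_neg (Finset.mem_erase.mp hi).1, add_zero]
  have hprodΓ' : (∏ i, Real.Gamma (a i))
      = Real.Gamma (a j) * ∏ i ∈ Finset.univ.erase j, Real.Gamma (a i) :=
    (Finset.mul_prod_erase _ _ (Finset.mem_univ j)).symm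
  have hprodw : (∏ i, w i ^ ((a i + if i = j then 1 else 0) - 1))
      = (w j * w j ^ (a j - 1)) * ∏ i ∈ Finset.univ.erase j, w i ^ (a i - 1) := by
    rw [← Finset.mul_prod_erase _ (fun i => w i ^ ((a i + if i = j then 1 else 0) - 1))
      (Finset.mem_univ j)]
    rw [if_pos rfl]
    have : w j ^ (a j + 1 - 1) = w j * w j ^ (a j - 1) := by
      rw [show a j + 1 - 1 = 1 + (a j - 1) by ring, Real.rpow_add (hw j), Real.rpow_one]
    rw [this]
    congr 1
    refine Finset.prod_congr rfl fun i hi => ?_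
    rw [if_neg (Finset.mem_erase.mp hi).1, add_zero]
  have hprodw' : (∏ i, w i ^ (a i - 1))
      = w j ^ (a j - 1) * ∏ i ∈ Finset.univ.erase j, w i ^ (a i - 1) :=
    (Finset.mul_prod_erase _ _ (Finset.mem_univ j)).symm
  unfold dirDensity
  rw [hsum, hΓsum, hprodΓ, hprodw, hprodΓ', hprodw']
  have hΓj : Real.Gamma (a j) ≠ 0 := (Real.Gamma_pos_of_pos (ha j)).ne'
  have hΓe : (∏ i ∈ Finset.univ.erase j, Real.Gamma (a i)) ≠ 0 :=
    Finset.prod_ne_zero_iff.mpr fun i _ => (Real.Gamma_pos_of_pos (ha i)).ne'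
  generalize w j ^ (a j - 1) = g
  generalize (∏ i ∈ Finset.univ.erase j, w i ^ (a i - 1)) = Q
  generalize hPv : (∏ i ∈ Finset.univ.erase j, Real.Gamma (a i)) = P at hΓe
  have haj : a j ≠ 0 := (ha j).ne'
  have hS : (∑ i, a i) ≠ 0 := hsa.ne'
  field_simp

/-- Lemma 3 (case `L = 1`): the posterior of a Dirichlet–normal-gamma prior
under a Gaussian-mixture likelihood, given observation `y`, equals the
`K`-component mixture `(1/M)·∑_j u_j c_j*·D(w; a+e_j)·NΓ(m_j,τ_j; μ_j*,λ_j*,α_j*,β_j*)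
·∏_{i≠j} NΓ(m_i,τ_i; μ_i,λ_i,α_i,β_i)` with `u_j = a_j/∑ a_i`, `M = ∑ u_j c_j*`. -/
theorem dirichlet_normal_gamma_mixture_posterior (K : ℕ) (hK : 0 < K)
    (a : Fin K → ℝ) (ha : ∀ i, 0 < a i)
    (μ lam α β : Fin K → ℝ)
    (hlam : ∀ i, 0 < lam i) (hα : ∀ i, 0 < α i) (hβ : ∀ i, 0 < β i)
    (y : ℝ)
    (μs lams αs βs cs u : Fin K → ℝ) (M : ℝ)
    (hμs : ∀ j, μs j = (lam j * μ j + y) / (lam j + 1))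
    (hlams : ∀ j, lams j = lam j + 1)
    (hαs : ∀ j, αs j = α j + 1 / 2)
    (hβs : ∀ j, βs j = β j + lam j * (y - μ j) ^ 2 / (2 * (1 + lam j)))
    (hcs : ∀ j, cs j = (1 / Real.sqrt (2 * Real.pi)) *
      Real.sqrt (lam j / lams j) * (Real.Gamma (αs j) / Real.Gamma (α j)) *
      (β j ^ α j / βs j ^ αs j))
    (hu : ∀ j, u j = a j / ∑ i, a i)
    (hM : M = ∑ j, u j * cs j) :
    ∀ (w : Fin K → ℝ), (∀ i, 0 < w i) → (∑ i, w i = 1) →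
    ∀ (m τ : Fin K → ℝ), (∀ i, 0 < τ i) →
      ((∑ i, w i * gaussDensity (m i) (τ i) y) *
        (dirDensity a w * ∏ i, nGammaDensity (μ i) (lam i) (α i) (β i) (m i) (τ i))) / M =
      (1 / M) * ∑ j, u j * cs j *
        dirDensity (fun i => a i + if i = j then 1 else 0) w *
        nGammaDensity (μs j) (lams j) (αs j) (βs j) (m j) (τ j) *
        ∏ i ∈ Finset.univ.erase j,
          nGammaDensity (μ i) (lam i) (α i) (β i) (m i) (τ i) := by
  intro w hw hwsum m τ hτ
  rw [div_eq_mul_inv, mul_comm _ M⁻¹, ← one_div, Finset.sum_mul]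
  congr 1
  refine Finset.sum_congr rfl fun j _ => ?_
  have hP : (∏ i, nGammaDensity (μ i) (lam i) (α i) (β i) (m i) (τ i))
      = nGammaDensity (μ j) (lam j) (α j) (β j) (m j) (τ j) *
        ∏ i ∈ Finset.univ.erase j, nGammaDensity (μ i) (lam i) (α i) (β i) (m i) (τ i) :=
    (Finset.mul_prod_erase _ _ (Finset.mem_univ j)).symm
  have hconj : gaussDensity (m j) (τ j) y * nGammaDensity (μ j) (lam j) (α j) (β j) (m j) (τ j)
      = cs j * nGammaDensity (μs j) (lams j) (αs j) (βs j) (m j) (τ j) := by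
    rw [hcs j, hμs j, hlams j, hαs j, hβs j]
    exact conj_step (μ j) (lam j) (α j) (β j) y (m j) (τ j) (hlam j) (hα j) (hβ j) (hτ j)
  have hdir : w j * dirDensity a w
      = u j * dirDensity (fun i => a i + if i = j then 1 else 0) w := by
    rw [hu j]
    exact dir_step a ha j w hw
  calc w j * gaussDensity (m j) (τ j) y *
        (dirDensity a w * ∏ i, nGammaDensity (μ i) (lam i) (α i) (β i) (m i) (τ i))
      = (w j * dirDensity a w) *
        (gaussDensity (m j) (τ j) y * nGammaDensity (μ j) (lam j) (α j) (β j) (m j) (τ j)) *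
        ∏ i ∈ Finset.univ.erase j, nGammaDensity (μ i) (lam i) (α i) (β i) (m i) (τ i) := by
        rw [hP]; ring
    _ = _ := by rw [hconj, hdir]; ring
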